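/- Let V = V₁ ⊕ V₂ be an orthogonal direct sum of Hilbert C*-modules. Then V has the property (mBS2) if and only if both V₁ and V₂ have the property (mBS2). -/

import Mathlib

open Filter Topology

/-- The class `CStarModule` of Mathlib (December 2024): a Hilbert C*-module with a *right*
action of `A` (given as `SMul Aᵐᵒᵖ E`), with `A`-valued inner product linear in the second
argument. -/
class RightCStarModule (A : outParam <| Type*) (E : Type*) [NonUnitalSemiring A] [StarRing A]
    [Module ℂ A] [AddCommGroup E] [Module ℂ E] [PartialOrder A] [SMul Aᵐᵒᵖ E] [Norm A] [Norm E]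
    extends Inner A E where
  inner_add_right {x} {y} {z} : inner x (y + z) = inner x y + inner x z
  inner_self_nonneg {x} : 0 ≤ inner x x
  inner_self {x} : inner x x = 0 ↔ x = 0
  inner_op_smul_right {a : A} {x y : E} : inner x (MulOpposite.op a • y) = inner x y * a
  inner_smul_right_complex {z : ℂ} {x} {y} : inner x (z • y) = z • inner x y
  star_inner x y : star (inner x y) = inner y x
  norm_eq_sqrt_norm_inner_self x : ‖x‖ = Real.sqrt ‖inner x x‖

variable (A : Type*) {E : Type*} [NonUnitalCStarAlgebra A] [PartialOrder A] [StarOrderedRing A]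
  [NormedAddCommGroup E] [NormedSpace ℂ E] [SMul Aᵐᵒᵖ E] [RightCStarModule A E]

/-- A subset `S` of a Hilbert C*-module has property (mBS2) if every sequence in `S` which
is Cauchy for all the seminorms `x ↦ ‖⟪z, x⟫‖`, `z ∈ S`, admits a subsequence whose Cesàro
means converge in norm. -/
def MBS2On (S : Set E) : Prop :=
  ∀ x : ℕ → E, (∀ n, x n ∈ S) →
    (∀ z ∈ S, CauchySeq fun n => (inner A z (x n) : A)) →
    ∃ φ : ℕ → ℕ, StrictMono φ ∧ ∃ l : E,
      Filter.Tendsto (fun k => (((k : ℕ) + 1 : ℝ))⁻¹ • ∑ i ∈ Finset.range (k + 1), x (φ i))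
        Filter.atTop (𝓝 l)

variable {A}

namespace RCSM

lemma star_inner (x y : E) : star (inner A x y) = inner A y x := RightCStarModule.star_inner x y

lemma inner_add_right {x y z : E} : inner A x (y + z) = inner A x y + inner A x z :=
  RightCStarModule.inner_add_right

lemma inner_add_left {x y z : E} : inner A (x + y) z = inner A x z + inner A y z := by
  rw [← star_inner, inner_add_right, star_add, star_inner, star_inner]

/-- Inner product in the second variable as an additive map. -/
noncomputable def innerAddHom (x : E) : E →+ A :=
  AddMonoidHom.mk' (fun y => inner A x y) fun _ _ => inner_add_right

lemma inner_sub_right {x y z : E} : inner A x (y - z) = inner A x y - inner A x z :=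
  map_sub (innerAddHom (A := A) x) y z

lemma inner_sub_left {x y z : E} : inner A (x - y) z = inner A x z - inner A y z := by
  rw [← star_inner, inner_sub_right, star_sub, star_inner, star_inner]

lemma inner_zero_right {x : E} : inner A x (0 : E) = 0 :=
  map_zero (innerAddHom (A := A) x)

lemma inner_zero_left {x : E} : inner A (0 : E) x = 0 := by
  rw [← star_inner, inner_zero_right, star_zero]

lemma inner_sum_right {ι : Type*} {s : Finset ι} {x : E} {y : ι → E} :
    inner A x (∑ i ∈ s, y i) = ∑ i ∈ s, inner A x (y i) :=
  map_sum (innerAddHom (A := A) x) y s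

lemma inner_sum_left {ι : Type*} {s : Finset ι} {x : ι → E} {y : E} :
    inner A (∑ i ∈ s, x i) y = ∑ i ∈ s, inner A (x i) y := by
  rw [← star_inner, inner_sum_right, star_sum]
  simp only [star_inner]

lemma inner_smul_right_real {r : ℝ} {x y : E} : inner A x (r • y) = r • inner A x y := by
  rw [← Complex.coe_smul, RightCStarModule.inner_smul_right_complex, Complex.coe_smul]

lemma inner_smul_left_real {r : ℝ} {x y : E} : inner A (r • x) y = r • inner A x y := by
  rw [← star_inner, inner_smul_right_real, star_smul, star_trivial, star_inner]

lemma inner_op_smul_left {a : A} {x y : E} :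
    inner A (MulOpposite.op a • x) y = star a * inner A x y := by
  rw [← star_inner, RightCStarModule.inner_op_smul_right, star_mul, star_inner]

lemma norm_sq_eq {x : E} : ‖x‖ ^ 2 = ‖inner A x x‖ := by
  rw [RightCStarModule.norm_eq_sqrt_norm_inner_self (A := A) x, Real.sq_sqrt (norm_nonneg _)]

lemma inner_mul_inner_swap_le {x y : E} :
    inner A y x * inner A x y ≤ ‖x‖ ^ 2 • inner A y y := by
  rcases eq_or_ne x 0 with h | h
  · subst h
    simp [inner_zero_left, inner_zero_right]
  · have hx : 0 < ‖x‖ := norm_pos_iff.mpr h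
    have h₁ : ∀ (a : A),
        (0 : A) ≤ ‖x‖ ^ 2 • (star a * a) - ‖x‖ ^ 2 • (star a * inner A x y)
                  - ‖x‖ ^ 2 • (inner A y x * a) + ‖x‖ ^ 2 • (‖x‖ ^ 2 • inner A y y) := fun a => by
      calc (0 : A) ≤ inner A (MulOpposite.op a • x - ‖x‖ ^ 2 • y)
                      (MulOpposite.op a • x - ‖x‖ ^ 2 • y) := by
                      exact RightCStarModule.inner_self_nonneg
            _ = star a * (inner A x x * a) - ‖x‖ ^ 2 • (star a * inner A x y)
                  - ‖x‖ ^ 2 • (inner A y x * a) + ‖x‖ ^ 2 • (‖x‖ ^ 2 • inner A y y) := by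
                      simp only [inner_sub_right, inner_sub_left,
                        RightCStarModule.inner_op_smul_right, inner_op_smul_left,
                        inner_smul_left_real, inner_smul_right_real, smul_mul_assoc,
                        mul_smul_comm, smul_sub, sub_mul, mul_sub, mul_assoc]
                      abel
            _ ≤ ‖x‖ ^ 2 • (star a * a) - ‖x‖ ^ 2 • (star a * inner A x y)
                  - ‖x‖ ^ 2 • (inner A y x * a) + ‖x‖ ^ 2 • (‖x‖ ^ 2 • inner A y y) := by
                      gcongr
                      have hle : star a * (inner A x x * a) ≤ ‖inner A x x‖ • (star a * a) := by
                        rw [← mul_assoc]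
                        exact CStarAlgebra.star_left_conjugate_le_norm_smul (star_inner x x)
                      rw [← norm_sq_eq] at hle
                      exact hle
    specialize h₁ (inner A x y)
    simp only [star_inner, sub_self, zero_sub, le_neg_add_iff_add_le, add_zero] at h₁
    rwa [smul_le_smul_iff_of_pos_left (pow_pos hx _)] at h₁

lemma norm_inner_le {x y : E} : ‖inner A x y‖ ≤ ‖x‖ * ‖y‖ := by
  have := calc ‖inner A x y‖ ^ 2 = ‖inner A y x * inner A x y‖ := by
                rw [← star_inner x y, CStarRing.norm_star_mul_self, pow_two]
    _ ≤ ‖‖x‖ ^ 2 • inner A y y‖ := by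
                refine CStarAlgebra.norm_le_norm_of_nonneg_of_le ?_ inner_mul_inner_swap_le
                rw [← star_inner x y]
                exact star_mul_self_nonneg _
    _ = ‖x‖ ^ 2 * ‖inner A y y‖ := by simp [norm_smul]
    _ = ‖x‖ ^ 2 * ‖y‖ ^ 2 := by rw [← norm_sq_eq]
    _ = (‖x‖ * ‖y‖) ^ 2 := by ring
  exact (pow_le_pow_iff_left₀ (norm_nonneg _) (by positivity) two_ne_zero).mp this

/-- The map `y ↦ ⟪x, y⟫` as a continuous linear map. -/
noncomputable def innerSL (x : E) : E →L[ℂ] A :=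
  LinearMap.mkContinuous
    { toFun := fun y => inner A x y
      map_add' := fun _ _ => inner_add_right
      map_smul' := fun _ _ => by
        simp only [RingHom.id_apply]
        exact RightCStarModule.inner_smul_right_complex }
    ‖x‖ fun _ => norm_inner_le

end RCSM

section Auxiliary

set_option linter.unusedSectionVars false

/-- Cesàro means (shifted index) of a convergent sequence converge. -/
lemma cesaro_succ {X : Type*} [NormedAddCommGroup X] [NormedSpace ℝ X] {u : ℕ → X} {l : X}
    (h : Tendsto u atTop (𝓝 l)) :
    Tendsto (fun k : ℕ => (((k : ℕ) + 1 : ℝ))⁻¹ • ∑ i ∈ Finset.range (k + 1), u i)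
      atTop (𝓝 l) := by
  have h2 := h.cesaro_smul.comp (tendsto_add_atTop_nat 1)
  simpa [Function.comp_def] using h2

/-- If the Cesàro means of `u ∘ φ` converge to `l` and `⟪z, u n⟫ → L`, then `⟪z, l⟫ = L`. -/
lemma inner_lim_eq {u : ℕ → E} {φ : ℕ → ℕ} (hφ : StrictMono φ) {l : E}
    (hl : Tendsto (fun k : ℕ => (((k : ℕ) + 1 : ℝ))⁻¹ • ∑ i ∈ Finset.range (k + 1), u (φ i))
      atTop (𝓝 l))
    {z : E} {L : A} (hz : Tendsto (fun n => (inner A z (u n) : A)) atTop (𝓝 L)) :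
    (inner A z l : A) = L := by
  have h1 : Tendsto (fun n => (inner A z (u (φ n)) : A)) atTop (𝓝 L) :=
    hz.comp hφ.tendsto_atTop
  have h2 := cesaro_succ h1
  have h3 : (fun k : ℕ => (((k : ℕ) + 1 : ℝ))⁻¹ •
      ∑ i ∈ Finset.range (k + 1), (inner A z (u (φ i)) : A)) =
      fun k : ℕ => (inner A z ((((k : ℕ) + 1 : ℝ))⁻¹ •
        ∑ i ∈ Finset.range (k + 1), u (φ i)) : A) := by
    funext k
    rw [RCSM.inner_smul_right_real, RCSM.inner_sum_right]
  rw [h3] at h2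
  have h4 : Tendsto (fun k : ℕ => (inner A z ((((k : ℕ) + 1 : ℝ))⁻¹ •
      ∑ i ∈ Finset.range (k + 1), u (φ i)) : A)) atTop (𝓝 (inner A z l)) := by
    have hc : Continuous fun w : E => (inner A z w : A) :=
      (RCSM.innerSL (A := A) (E := E) z).continuous
    exact (hc.tendsto l).comp hl
  exact tendsto_nhds_unique h4 h2

/-- Uniform norm bound from weak boundedness (Banach–Steinhaus). -/
lemma norm_bound [CompleteSpace E] {u : ℕ → E}
    (h : ∀ z : E, ∃ C, ∀ n, ‖(inner A (u n) z : A)‖ ≤ C) :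
    ∃ M, 0 ≤ M ∧ ∀ n, ‖u n‖ ≤ M := by
  obtain ⟨C, hC⟩ := banach_steinhaus (g := fun n => (RCSM.innerSL (A := A) (E := E)) (u n))
    (fun z => h z)
  refine ⟨max C 0, le_max_right _ _, fun n => ?_⟩
  have h1 : ‖u n‖ ^ 2 ≤ max C 0 * ‖u n‖ := by
    calc ‖u n‖ ^ 2 = ‖(inner A (u n) (u n) : A)‖ := RCSM.norm_sq_eq
    _ = ‖(RCSM.innerSL (A := A) (E := E)) (u n) (u n)‖ := rfl
    _ ≤ ‖(RCSM.innerSL (A := A) (E := E)) (u n)‖ * ‖u n‖ :=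
        ContinuousLinearMap.le_opNorm _ _
    _ ≤ max C 0 * ‖u n‖ :=
        mul_le_mul_of_nonneg_right ((hC n).trans (le_max_left _ _)) (norm_nonneg _)
  rcases eq_or_lt_of_le (norm_nonneg (u n)) with h0 | h0
  · rw [← h0]; exact le_max_right _ _
  · have h2 := h1
    rw [sq] at h2
    exact le_of_mul_le_mul_right (by linarith) h0

/-- Kakutani-type extraction of an almost orthogonal subsequence from a weakly null sequence. -/
lemma extraction {y : ℕ → E}
    (hy : ∀ z : E, Tendsto (fun n => (inner A z (y n) : A)) atTop (𝓝 0)) :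
    ∃ φ : ℕ → ℕ, StrictMono φ ∧
      ∀ i j, i < j → ‖(inner A (y (φ i)) (y (φ j)) : A)‖ ≤ (1 / 2 : ℝ) ^ j := by
  have hstep : ∀ m j : ℕ, ∃ N, ∀ n, N ≤ n → ∀ p, p ≤ m →
      ‖(inner A (y p) (y n) : A)‖ ≤ (1 / 2 : ℝ) ^ j := by
    intro m j
    have hev : ∀ᶠ n in atTop, ∀ p ∈ Finset.range (m + 1),
        ‖(inner A (y p) (y n) : A)‖ ≤ (1 / 2 : ℝ) ^ j := by
      rw [Filter.eventually_all_finset]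
      intro p _
      have h1 : Tendsto (fun n => ‖(inner A (y p) (y n) : A)‖) atTop (𝓝 0) := by
        simpa using (hy (y p)).norm
      have h2 : (0 : ℝ) < (1 / 2 : ℝ) ^ j := by positivity
      filter_upwards [h1.eventually_lt_const h2] with n hn using hn.le
    obtain ⟨N, hN⟩ := eventually_atTop.mp hev
    exact ⟨N, fun n hn p hp => hN n hn p (Finset.mem_range.mpr (by omega))⟩
  choose N hN using hstep
  set φ : ℕ → ℕ := fun j => Nat.rec 0 (fun j prev => max (prev + 1) (N prev (j + 1))) j with hφ
  have hsucc : ∀ j, φ (j + 1) = max (φ j + 1) (N (φ j) (j + 1)) := fun j => rfl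
  have hmono : StrictMono φ := strictMono_nat_of_lt_succ fun n => by
    rw [hsucc]; exact lt_of_lt_of_le (Nat.lt_succ_self _) (le_max_left _ _)
  refine ⟨φ, hmono, fun i j hij => ?_⟩
  obtain ⟨j', rfl⟩ : ∃ j', j = j' + 1 := ⟨j - 1, by omega⟩
  have h1 : N (φ j') (j' + 1) ≤ φ (j' + 1) := by rw [hsucc]; exact le_max_right _ _
  exact hN (φ j') (j' + 1) (φ (j' + 1)) h1 (φ i) (hmono.monotone (by omega))

/-- The key estimate on the norm of sums of an almost orthogonal bounded family. -/
lemma sum_sq_bound {y : ℕ → E} {φ : ℕ → ℕ} {M : ℝ} (hM : ∀ n, ‖y n‖ ≤ M)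
    (hsm : ∀ i j, i < j → ‖(inner A (y (φ i)) (y (φ j)) : A)‖ ≤ (1 / 2 : ℝ) ^ j) (k : ℕ) :
    ‖∑ i ∈ Finset.range (k + 1), y (φ i)‖ ^ 2 ≤ ((k : ℝ) + 1) * (M ^ 2 + 4) := by
  have hgeom : ∀ n : ℕ, (∑ i ∈ Finset.range n, (1 / 2 : ℝ) ^ i) ≤ 2 := fun n => by
    calc ∑ i ∈ Finset.range n, (1 / 2 : ℝ) ^ i ≤ ∑' i : ℕ, (1 / 2 : ℝ) ^ i :=
          Summable.sum_le_tsum _ (fun i _ => by positivity) summable_geometric_two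
    _ = 2 := tsum_geometric_two
  have hterm : ∀ i j : ℕ, ‖(inner A (y (φ i)) (y (φ j)) : A)‖ ≤
      (if i = j then M ^ 2 else 0) + ((1 / 2 : ℝ) ^ i + (1 / 2 : ℝ) ^ j) := by
    intro i j
    have hp : (0:ℝ) ≤ (1 / 2 : ℝ) ^ i := by positivity
    have hq : (0:ℝ) ≤ (1 / 2 : ℝ) ^ j := by positivity
    rcases lt_trichotomy i j with h | h | h
    · rw [if_neg (by omega)]
      linarith [hsm i j h]
    · subst h
      rw [if_pos rfl]
      have h1 : ‖(inner A (y (φ i)) (y (φ i)) : A)‖ = ‖y (φ i)‖ ^ 2 :=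
        RCSM.norm_sq_eq.symm
      have h2 : ‖y (φ i)‖ ^ 2 ≤ M ^ 2 := by
        have := hM (φ i)
        nlinarith [norm_nonneg (y (φ i))]
      linarith [h1.le.trans h2]
    · rw [if_neg (by omega)]
      have h1 : ‖(inner A (y (φ i)) (y (φ j)) : A)‖ = ‖(inner A (y (φ j)) (y (φ i)) : A)‖ := by
        rw [← RCSM.star_inner, norm_star]
      rw [h1]
      linarith [hsm j i h]
  rw [RCSM.norm_sq_eq]
  have hexp : (inner A (∑ i ∈ Finset.range (k + 1), y (φ i))
      (∑ i ∈ Finset.range (k + 1), y (φ i)) : A) =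
      ∑ i ∈ Finset.range (k + 1), ∑ j ∈ Finset.range (k + 1),
        (inner A (y (φ i)) (y (φ j)) : A) := by
    rw [RCSM.inner_sum_left]
    exact Finset.sum_congr rfl fun i _ => RCSM.inner_sum_right
  rw [hexp]
  calc ‖∑ i ∈ Finset.range (k + 1), ∑ j ∈ Finset.range (k + 1),
        (inner A (y (φ i)) (y (φ j)) : A)‖
      ≤ ∑ i ∈ Finset.range (k + 1), ∑ j ∈ Finset.range (k + 1),
        ‖(inner A (y (φ i)) (y (φ j)) : A)‖ :=
        (norm_sum_le _ _).trans (Finset.sum_le_sum fun i _ => norm_sum_le _ _)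
    _ ≤ ∑ i ∈ Finset.range (k + 1), (M ^ 2 + (((k : ℝ) + 1) * (1 / 2 : ℝ) ^ i + 2)) := by
        refine Finset.sum_le_sum fun i hi => ?_
        calc ∑ j ∈ Finset.range (k + 1), ‖(inner A (y (φ i)) (y (φ j)) : A)‖
            ≤ ∑ j ∈ Finset.range (k + 1),
              ((if i = j then M ^ 2 else 0) + ((1 / 2 : ℝ) ^ i + (1 / 2 : ℝ) ^ j)) :=
              Finset.sum_le_sum fun j _ => hterm i j
          _ = (if i ∈ Finset.range (k+1) then M ^ 2 else 0)
              + (((k : ℝ) + 1) * (1 / 2 : ℝ) ^ i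
                + ∑ j ∈ Finset.range (k + 1), (1 / 2 : ℝ) ^ j) := by
              rw [Finset.sum_add_distrib, Finset.sum_ite_eq, Finset.sum_add_distrib,
                Finset.sum_const, Finset.card_range, nsmul_eq_mul]
              push_cast
              ring
          _ ≤ M ^ 2 + (((k : ℝ) + 1) * (1 / 2 : ℝ) ^ i + 2) := by
              rw [if_pos hi]
              have := hgeom (k + 1)
              linarith
    _ ≤ ((k : ℝ) + 1) * (M ^ 2 + 4) := by
        rw [Finset.sum_add_distrib, Finset.sum_add_distrib, Finset.sum_const,
          Finset.card_range, nsmul_eq_mul, ← Finset.mul_sum, Finset.sum_const,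
          Finset.card_range, nsmul_eq_mul]
        have h1 : ((k : ℝ) + 1) * (∑ i ∈ Finset.range (k + 1), (1 / 2 : ℝ) ^ i)
            ≤ ((k : ℝ) + 1) * 2 :=
          mul_le_mul_of_nonneg_left (hgeom (k + 1)) (by positivity)
        push_cast
        push_cast at h1
        nlinarith [Nat.cast_nonneg (α := ℝ) k]

end Auxiliary

/-- Let a Hilbert C*-module `E` be the orthogonal direct sum of closed submodules `V₁` and
`V₂`. Then `E` has property (mBS2) iff both `V₁` and `V₂` do. -/
theorem mBS2_direct_sum [CompleteSpace E] (V₁ V₂ : Submodule ℂ E)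
    (h₁c : IsClosed (V₁ : Set E)) (h₂c : IsClosed (V₂ : Set E))
    (h₁s : ∀ (a : A), ∀ x ∈ V₁, MulOpposite.op a • x ∈ V₁)
    (h₂s : ∀ (a : A), ∀ x ∈ V₂, MulOpposite.op a • x ∈ V₂)
    (horth : ∀ x ∈ V₁, ∀ y ∈ V₂, (inner A x y : A) = 0)
    (hsum : ∀ v : E, ∃ x ∈ V₁, ∃ y ∈ V₂, v = x + y) :
    MBS2On A (Set.univ : Set E) ↔ MBS2On A (V₁ : Set E) ∧ MBS2On A (V₂ : Set E) := by
  constructor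
  · intro h
    constructor
    · intro x hx hC
      refine h x (fun n => trivial) fun z _ => ?_
      obtain ⟨z₁, hz₁, z₂, hz₂, rfl⟩ := hsum z
      have he : (fun n => (inner A (z₁ + z₂) (x n) : A)) = fun n => (inner A z₁ (x n) : A) := by
        funext n
        have h0 : (inner A z₂ (x n) : A) = 0 := by
          rw [← RCSM.star_inner, horth (x n) (hx n) z₂ hz₂, star_zero]
        rw [RCSM.inner_add_left, h0, add_zero]
      rw [he]
      exact hC z₁ hz₁
    · intro x hx hC
      refine h x (fun n => trivial) fun z _ => ?_
      obtain ⟨z₁, hz₁, z₂, hz₂, rfl⟩ := hsum z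
      have he : (fun n => (inner A (z₁ + z₂) (x n) : A)) = fun n => (inner A z₂ (x n) : A) := by
        funext n
        rw [RCSM.inner_add_left, horth z₁ hz₁ (x n) (hx n), zero_add]
      rw [he]
      exact hC z₂ hz₂
  · rintro ⟨hV₁, hV₂⟩ x _ hC
    choose a ha b hb hxab using fun n => hsum (x n)
    choose L hL using fun z : E => cauchySeq_tendsto_of_complete (hC z trivial)
    have ha' : ∀ z ∈ V₁, (fun n => (inner A z (a n) : A)) = fun n => (inner A z (x n) : A) := by
      intro z hz
      funext n
      rw [hxab n, RCSM.inner_add_right, horth z hz (b n) (hb n), add_zero]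
    have hb' : ∀ z ∈ V₂, (fun n => (inner A z (b n) : A)) = fun n => (inner A z (x n) : A) := by
      intro z hz
      funext n
      have h0 : (inner A z (a n) : A) = 0 := by
        rw [← RCSM.star_inner, horth (a n) (ha n) z hz, star_zero]
      rw [hxab n, RCSM.inner_add_right, h0, zero_add]
    obtain ⟨φ₁, hφ₁, l₁, hl₁⟩ := hV₁ a ha fun z hz => by rw [ha' z hz]; exact hC z trivial
    obtain ⟨φ₂, hφ₂, l₂, hl₂⟩ := hV₂ b hb fun z hz => by rw [hb' z hz]; exact hC z trivial
    have hl₁m : l₁ ∈ V₁ :=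
      h₁c.mem_of_tendsto hl₁ (Filter.Eventually.of_forall fun k =>
        Submodule.smul_of_tower_mem _ _ (Submodule.sum_mem _ fun i _ => ha (φ₁ i)))
    have hl₂m : l₂ ∈ V₂ :=
      h₂c.mem_of_tendsto hl₂ (Filter.Eventually.of_forall fun k =>
        Submodule.smul_of_tower_mem _ _ (Submodule.sum_mem _ fun i _ => hb (φ₂ i)))
    have key₁ : ∀ z ∈ V₁, (inner A z l₁ : A) = L z := fun z hz =>
      inner_lim_eq hφ₁ hl₁ (by rw [ha' z hz]; exact hL z)
    have key₂ : ∀ z ∈ V₂, (inner A z l₂ : A) = L z := fun z hz =>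
      inner_lim_eq hφ₂ hl₂ (by rw [hb' z hz]; exact hL z)
    set l : E := l₁ + l₂ with hldef
    set y : ℕ → E := fun n => x n - l with hydef
    have hweak : ∀ z : E, Tendsto (fun n => (inner A z (y n) : A)) atTop (𝓝 0) := by
      intro z
      obtain ⟨z₁, hz₁, z₂, hz₂, rfl⟩ := hsum z
      have he : ∀ n, (inner A (z₁ + z₂) (y n) : A)
          = ((inner A z₁ (x n) : A) - inner A z₁ l₁) + ((inner A z₂ (x n) : A) - inner A z₂ l₂) := by
        intro n
        have c₁ : (inner A z₁ l₂ : A) = 0 := horth z₁ hz₁ l₂ hl₂m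
        have c₂ : (inner A z₂ l₁ : A) = 0 := by
          rw [← RCSM.star_inner, horth l₁ hl₁m z₂ hz₂, star_zero]
        have c₃ : (inner A z₂ (x n) : A) = inner A z₂ (x n) := rfl
        simp only [hydef, hldef, RCSM.inner_sub_right, RCSM.inner_add_left,
          RCSM.inner_add_right, c₁, c₂]
        abel
      have t₁ : Tendsto (fun n => (inner A z₁ (x n) : A) - inner A z₁ l₁) atTop (𝓝 0) := by
        rw [key₁ z₁ hz₁]
        simpa using (hL z₁).sub_const (L z₁)
      have t₂ : Tendsto (fun n => (inner A z₂ (x n) : A) - inner A z₂ l₂) atTop (𝓝 0) := by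
        rw [key₂ z₂ hz₂]
        simpa using (hL z₂).sub_const (L z₂)
      simp only [he]
      simpa using t₁.add t₂
    obtain ⟨M, hM0, hM⟩ := norm_bound (u := y) fun z => by
      have h1 : Tendsto (fun n => ‖(inner A (y n) z : A)‖) atTop (𝓝 0) := by
        have h2 : ∀ n, ‖(inner A (y n) z : A)‖ = ‖(inner A z (y n) : A)‖ := fun n => by
          rw [← RCSM.star_inner, norm_star]
        simp only [h2]
        simpa using (hweak z).norm
      obtain ⟨C, hC'⟩ := h1.bddAbove_range
      exact ⟨C, fun n => hC' ⟨n, rfl⟩⟩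
    obtain ⟨φ, hφ, hsm⟩ := extraction hweak
    refine ⟨φ, hφ, l, ?_⟩
    have hmean : ∀ k : ℕ, (((k : ℕ) + 1 : ℝ))⁻¹ • ∑ i ∈ Finset.range (k + 1), x (φ i)
        = ((((k : ℕ) + 1 : ℝ))⁻¹ • ∑ i ∈ Finset.range (k + 1), y (φ i)) + l := by
      intro k
      have hs : ∑ i ∈ Finset.range (k + 1), x (φ i)
          = (∑ i ∈ Finset.range (k + 1), y (φ i)) + (k + 1) • l := by
        simp [hydef, Finset.sum_sub_distrib]
      rw [hs, smul_add]
      congr 1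
      rw [← Nat.cast_smul_eq_nsmul ℝ, smul_smul]
      have : (((k : ℕ) + 1 : ℝ))⁻¹ * ((k + 1 : ℕ) : ℝ) = 1 := by
        push_cast
        rw [inv_mul_cancel₀]
        positivity
      rw [this, one_smul]
    have hS : Tendsto (fun k : ℕ => (((k : ℕ) + 1 : ℝ))⁻¹ •
        ∑ i ∈ Finset.range (k + 1), y (φ i)) atTop (𝓝 0) := by
      rw [tendsto_zero_iff_norm_tendsto_zero]
      have hb2 : ∀ k : ℕ, ‖(((k : ℕ) + 1 : ℝ))⁻¹ • ∑ i ∈ Finset.range (k + 1), y (φ i)‖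
          ≤ Real.sqrt ((M ^ 2 + 4) / ((k : ℝ) + 1)) := by
        intro k
        have hk0 : (0 : ℝ) < (k : ℝ) + 1 := by positivity
        rw [norm_smul, Real.norm_eq_abs, abs_of_pos (by positivity)]
        rw [Real.le_sqrt (by positivity) (by positivity)]
        have h1 := sum_sq_bound (A := A) hM hsm k
        rw [mul_pow]
        calc (((k : ℝ) + 1)⁻¹) ^ 2 * ‖∑ i ∈ Finset.range (k + 1), y (φ i)‖ ^ 2
            ≤ (((k : ℝ) + 1)⁻¹) ^ 2 * (((k : ℝ) + 1) * (M ^ 2 + 4)) :=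
            mul_le_mul_of_nonneg_left h1 (by positivity)
          _ = (M ^ 2 + 4) / ((k : ℝ) + 1) := by
            field_simp
      have hb3 : Tendsto (fun k : ℕ => Real.sqrt ((M ^ 2 + 4) / ((k : ℝ) + 1)))
          atTop (𝓝 0) := by
        have h4 : Tendsto (fun k : ℕ => (M ^ 2 + 4) / ((k : ℝ) + 1)) atTop (𝓝 0) := by
          apply Tendsto.div_atTop tendsto_const_nhds
          exact tendsto_atTop_add_const_right _ 1 tendsto_natCast_atTop_atTop
        have h5 := (Real.continuous_sqrt.tendsto 0).comp h4
        simpa [Function.comp_def] using h5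
      exact squeeze_zero (fun k => norm_nonneg _) hb2 hb3
    have := hS.add_const l
    rw [zero_add] at this
    simpa only [hmean] using this
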